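/- Let C ⊆ ℝⁿ be a closed convex cone. If A₀ is a real n×n matrix such that exp(tA₀) maps C onto C for every t ∈ ℝ, and A₁ is a real n×n matrix with A₁(C) ⊆ C, then A₀ + A₁ ∈ M(C). -/

import Mathlib

open Matrix

/-- `A ∈ M(C)`: for every `t ≥ 0` the matrix exponential `exp(tA)` maps `C` into `C`. -/
def memM {n : ℕ} (C : Set (Fin n → ℝ)) (A : Matrix (Fin n) (Fin n) ℝ) : Prop :=
  ∀ t : ℝ, 0 ≤ t → ∀ x ∈ C, (NormedSpace.exp (t • A)).mulVec x ∈ C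

section BanachTrotter

open NormedSpace Filter Topology Nat

variable {𝔸 : Type*} [NormedRing 𝔸] [NormedAlgebra ℝ 𝔸] [CompleteSpace 𝔸] [NormOneClass 𝔸]

lemma aux_norm_pow (x : 𝔸) (n : ℕ) : ‖x ^ n‖ ≤ ‖x‖ ^ n := by
  cases n with
  | zero => simp
  | succ n => exact norm_pow_le' x n.succ_pos

lemma aux_norm_exp_le (x : 𝔸) : ‖exp x‖ ≤ Real.exp ‖x‖ := by
  rw [exp_eq_tsum ℝ]
  refine (norm_tsum_le_tsum_norm (norm_expSeries_summable' x)).trans ?_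
  rw [Real.exp_eq_exp_ℝ, exp_eq_tsum ℝ]
  refine Summable.tsum_le_tsum (fun n => ?_) (norm_expSeries_summable' x) (expSeries_summable' (𝕂 := ℝ) ‖x‖)
  rw [norm_smul, norm_inv, Real.norm_natCast, smul_eq_mul]
  gcongr
  exact aux_norm_pow x n

lemma aux_norm_exp_remainder (x : 𝔸) :
    ‖exp x - 1 - x‖ ≤ ‖x‖ ^ 2 * Real.exp ‖x‖ := by
  have h : HasSum (fun n : ℕ => (n !⁻¹ : ℝ) • x ^ n) (exp x) := exp_series_hasSum_exp' x
  have h2 : HasSum (fun n : ℕ => (((n + 2)! : ℝ))⁻¹ • x ^ (n + 2))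
      (exp x - ∑ i ∈ Finset.range 2, (i !⁻¹ : ℝ) • x ^ i) := (hasSum_nat_add_iff' 2).mpr h
  have hsum : ∑ i ∈ Finset.range 2, (i !⁻¹ : ℝ) • x ^ i = 1 + x := by
    simp [Finset.sum_range_succ]
  rw [hsum] at h2
  have hb : ∀ n : ℕ, ‖(((n + 2)! : ℝ))⁻¹ • x ^ (n + 2)‖ ≤ ‖x‖ ^ 2 * ((n !⁻¹ : ℝ) * ‖x‖ ^ n) := by
    intro n
    rw [norm_smul, norm_inv, Real.norm_natCast]
    have h1 : ‖x ^ (n + 2)‖ ≤ ‖x‖ ^ 2 * ‖x‖ ^ n := by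
      calc ‖x ^ (n + 2)‖ ≤ ‖x‖ ^ (n + 2) := aux_norm_pow x (n + 2)
        _ = ‖x‖ ^ 2 * ‖x‖ ^ n := by ring
    have h3 : (((n + 2)! : ℝ))⁻¹ ≤ ((n ! : ℝ))⁻¹ := by
      apply inv_anti₀ (by positivity)
      exact_mod_cast Nat.factorial_le (by omega)
    calc (((n + 2)! : ℝ))⁻¹ * ‖x ^ (n + 2)‖
        ≤ ((n ! : ℝ))⁻¹ * (‖x‖ ^ 2 * ‖x‖ ^ n) :=
          mul_le_mul h3 h1 (norm_nonneg _) (by positivity)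
      _ = ‖x‖ ^ 2 * ((n !⁻¹ : ℝ) * ‖x‖ ^ n) := by push_cast; ring
  have hg : HasSum (fun n : ℕ => ‖x‖ ^ 2 * ((n !⁻¹ : ℝ) * ‖x‖ ^ n)) (‖x‖ ^ 2 * Real.exp ‖x‖) := by
    have hs : HasSum (fun n : ℕ => (n !⁻¹ : ℝ) • ‖x‖ ^ n) (exp ‖x‖) :=
      exp_series_hasSum_exp' (𝕂 := ℝ) ‖x‖
    simp only [smul_eq_mul] at hs
    rw [Real.exp_eq_exp_ℝ]
    exact hs.mul_left _
  have hsummable : Summable fun n : ℕ => ‖(((n + 2)! : ℝ))⁻¹ • x ^ (n + 2)‖ :=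
    Summable.of_nonneg_of_le (fun n => norm_nonneg _) hb hg.summable
  calc ‖exp x - 1 - x‖ = ‖exp x - (1 + x)‖ := by rw [sub_sub]
    _ = ‖∑' n : ℕ, (((n + 2)! : ℝ))⁻¹ • x ^ (n + 2)‖ := by rw [h2.tsum_eq]
    _ ≤ ∑' n : ℕ, ‖(((n + 2)! : ℝ))⁻¹ • x ^ (n + 2)‖ := norm_tsum_le_tsum_norm hsummable
    _ ≤ ∑' n : ℕ, ‖x‖ ^ 2 * ((n !⁻¹ : ℝ) * ‖x‖ ^ n) := Summable.tsum_le_tsum hb hsummable hg.summable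
    _ = ‖x‖ ^ 2 * Real.exp ‖x‖ := hg.tsum_eq

lemma aux_norm_pow_sub_pow (x y : 𝔸) (M : ℝ) (hx : ‖x‖ ≤ M) (hy : ‖y‖ ≤ M) (hM : 0 ≤ M) :
    ∀ k : ℕ, ‖x ^ (k + 1) - y ^ (k + 1)‖ ≤ (k + 1 : ℝ) * M ^ k * ‖x - y‖ := by
  intro k
  induction k with
  | zero => simp
  | succ k ih =>
      have key : x ^ (k + 2) - y ^ (k + 2) = x ^ (k + 1) * (x - y) + (x ^ (k + 1) - y ^ (k + 1)) * y := by
        noncomm_ring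
      calc ‖x ^ (k + 2) - y ^ (k + 2)‖
          ≤ ‖x ^ (k + 1) * (x - y)‖ + ‖(x ^ (k + 1) - y ^ (k + 1)) * y‖ := by
            rw [key]; exact norm_add_le _ _
        _ ≤ ‖x‖ ^ (k + 1) * ‖x - y‖ + ((k + 1 : ℝ) * M ^ k * ‖x - y‖) * ‖y‖ := by
            gcongr
            · exact (norm_mul_le _ _).trans (by gcongr; exact aux_norm_pow x (k+1))
            · exact (norm_mul_le _ _).trans (by gcongr)
        _ ≤ M ^ (k + 1) * ‖x - y‖ + ((k + 1 : ℝ) * M ^ k * ‖x - y‖) * M := by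
            gcongr
        _ = ((k : ℝ) + 1 + 1) * M ^ (k + 1) * ‖x - y‖ := by ring
        _ = ((k + 1 : ℕ) + 1 : ℝ) * M ^ (k + 1) * ‖x - y‖ := by push_cast; ring

lemma trotter (a b : 𝔸) :
    Tendsto (fun k : ℕ => (exp ((k : ℝ)⁻¹ • a) * (1 + (k : ℝ)⁻¹ • b)) ^ k) atTop
      (𝓝 (exp (a + b))) := by
  rw [← tendsto_sub_nhds_zero_iff]
  set s : ℝ := ‖a‖ + ‖b‖ with hs
  set Cc : ℝ := ‖a‖ * ‖b‖ + ‖a‖ ^ 2 * Real.exp ‖a‖ * (1 + ‖b‖) + s ^ 2 * Real.exp s with hCc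
  have hCc0 : 0 ≤ Cc := by positivity
  set D : ℝ := Real.exp s * Cc with hD
  have main : ∀ k : ℕ, 1 ≤ k →
      ‖(exp ((k : ℝ)⁻¹ • a) * (1 + (k : ℝ)⁻¹ • b)) ^ k - exp (a + b)‖ ≤ D / k := by
    intro k hk
    have hk0 : (0 : ℝ) < (k : ℝ) := by exact_mod_cast hk
    set ia : ℝ := (k : ℝ)⁻¹ with hia
    have hia0 : 0 < ia := inv_pos.2 hk0
    have hia1 : ia ≤ 1 := inv_le_one_of_one_le₀ (by exact_mod_cast hk)
    set u := ia • a with hudef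
    set v := ia • b with hvdef
    have hu : ‖u‖ = ia * ‖a‖ := by rw [hudef, norm_smul, Real.norm_eq_abs, abs_of_pos hia0]
    have hv : ‖v‖ = ia * ‖b‖ := by rw [hvdef, norm_smul, Real.norm_eq_abs, abs_of_pos hia0]
    have huv : ‖u + v‖ ≤ ia * s := by
      refine (norm_add_le _ _).trans ?_
      rw [hu, hv, hs]
      exact le_of_eq (by ring)
    set P := exp u * (1 + v) with hPdef
    set S := exp (ia • (a + b)) with hSdef
    have hw : ia • (a + b) = u + v := smul_add ia a b
    have hSpow : S ^ k = exp (a + b) := by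
      letI : NormedAlgebra ℚ 𝔸 := NormedAlgebra.restrictScalars ℚ ℝ 𝔸
      rw [hSdef, ← NormedSpace.exp_nsmul, ← Nat.cast_smul_eq_nsmul ℝ k (ia • (a + b)), smul_smul,
        hia, mul_inv_cancel₀ (ne_of_gt hk0), one_smul]
    have hMk1 : (1 : ℝ) ≤ Real.exp (ia * s) := Real.one_le_exp (by positivity)
    have hP : ‖P‖ ≤ Real.exp (ia * s) := by
      calc ‖P‖ ≤ ‖exp u‖ * ‖1 + v‖ := norm_mul_le _ _
        _ ≤ Real.exp ‖u‖ * (1 + ‖v‖) := by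
            apply mul_le_mul (aux_norm_exp_le u) ((norm_add_le _ _).trans (by rw [norm_one]))
              (norm_nonneg _) (Real.exp_pos _).le
        _ ≤ Real.exp ‖u‖ * Real.exp ‖v‖ := by
            gcongr
            linarith [Real.add_one_le_exp ‖v‖]
        _ = Real.exp (‖u‖ + ‖v‖) := (Real.exp_add _ _).symm
        _ = Real.exp (ia * s) := by rw [hu, hv, hs]; ring_nf
    have hS : ‖S‖ ≤ Real.exp (ia * s) := by
      refine (aux_norm_exp_le _).trans (Real.exp_le_exp.2 ?_)
      rw [norm_smul, Real.norm_eq_abs, abs_of_pos hia0, hs]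
      gcongr
      exact norm_add_le a b
    have hid : P - S = u * v + (exp u - 1 - u) * (1 + v) - (exp (u + v) - 1 - (u + v)) := by
      rw [hPdef, hSdef, hw]
      noncomm_ring
    have hPS : ‖P - S‖ ≤ ia ^ 2 * Cc := by
      calc ‖P - S‖
          = ‖u * v + (exp u - 1 - u) * (1 + v) - (exp (u + v) - 1 - (u + v))‖ := by rw [hid]
        _ ≤ ‖u * v + (exp u - 1 - u) * (1 + v)‖ + ‖exp (u + v) - 1 - (u + v)‖ :=
            norm_sub_le _ _
        _ ≤ ‖u * v‖ + ‖(exp u - 1 - u) * (1 + v)‖ + ‖exp (u + v) - 1 - (u + v)‖ := by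
            gcongr
            exact norm_add_le _ _
        _ ≤ ‖u‖ * ‖v‖ + (‖u‖ ^ 2 * Real.exp ‖u‖) * (1 + ‖v‖) + ‖u + v‖ ^ 2 * Real.exp ‖u + v‖ := by
            gcongr
            · exact norm_mul_le _ _
            · refine (norm_mul_le _ _).trans ?_
              apply mul_le_mul (aux_norm_exp_remainder u)
                ((norm_add_le _ _).trans (by rw [norm_one])) (norm_nonneg _) (by positivity)
            · exact aux_norm_exp_remainder (u + v)
        _ ≤ (ia * ‖a‖) * (ia * ‖b‖) + ((ia * ‖a‖) ^ 2 * Real.exp ‖a‖) * (1 + ‖b‖)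
              + (ia * s) ^ 2 * Real.exp s := by
            rw [hu, hv]
            gcongr <;> first
              | exact huv
              | exact mul_le_of_le_one_left (norm_nonneg a) hia1
              | exact mul_le_of_le_one_left (norm_nonneg b) hia1
              | exact Real.exp_le_exp.2 (mul_le_of_le_one_left (norm_nonneg a) hia1)
              | exact huv.trans (mul_le_of_le_one_left (by positivity) hia1)
              | exact Real.exp_le_exp.2 (huv.trans (mul_le_of_le_one_left (by positivity) hia1))
        _ = ia ^ 2 * Cc := by rw [hCc]; ring
    obtain ⟨m, rfl⟩ : ∃ m, k = m + 1 := ⟨k - 1, by omega⟩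
    have hkey := aux_norm_pow_sub_pow P S (Real.exp (ia * s)) hP hS
      (le_trans zero_le_one hMk1) m
    have hcancel : ((m + 1 : ℕ) : ℝ) * ia = 1 := mul_inv_cancel₀ (ne_of_gt hk0)
    have hexp : Real.exp (ia * s) ^ m ≤ Real.exp s := by
      calc Real.exp (ia * s) ^ m ≤ Real.exp (ia * s) ^ (m + 1) :=
            pow_le_pow_right₀ hMk1 (Nat.le_succ m)
        _ = Real.exp (((m + 1 : ℕ) : ℝ) * (ia * s)) := (Real.exp_nat_mul _ _).symm
        _ = Real.exp s := by rw [← mul_assoc, hcancel, one_mul]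
    calc ‖P ^ (m + 1) - exp (a + b)‖ = ‖P ^ (m + 1) - S ^ (m + 1)‖ := by rw [hSpow]
      _ ≤ ((m : ℝ) + 1) * Real.exp (ia * s) ^ m * ‖P - S‖ := hkey
      _ ≤ ((m : ℝ) + 1) * Real.exp s * (ia ^ 2 * Cc) := by
          have h1 : (0:ℝ) ≤ (m : ℝ) + 1 := by positivity
          refine mul_le_mul ?_ hPS (norm_nonneg _) (by positivity)
          exact mul_le_mul_of_nonneg_left hexp h1
      _ = D * (((m + 1 : ℕ) : ℝ) * ia * ia) := by rw [hD]; push_cast; ring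
      _ = D / ((m + 1 : ℕ) : ℝ) := by rw [hcancel, one_mul, hia, div_eq_mul_inv]
  exact squeeze_zero_norm' (eventually_atTop.2 ⟨1, main⟩)
    (tendsto_const_div_atTop_nhds_zero_nat D)

end BanachTrotter

/-- If `exp(tA₀)` maps `C` onto `C` for every real `t`, and `A₁` maps `C` into `C`,
then `A₀ + A₁ ∈ M(C)`. -/
theorem lieAut_add_end_mem_M {n : ℕ} (C : Set (Fin n → ℝ))
    (hclosed : IsClosed C) (hconv : Convex ℝ C)
    (hcone : ∀ x ∈ C, ∀ t : ℝ, 0 < t → t • x ∈ C)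
    (A₀ A₁ : Matrix (Fin n) (Fin n) ℝ)
    (hA₀ : ∀ t : ℝ, (NormedSpace.exp (t • A₀)).mulVec '' C = C)
    (hA₁ : ∀ x ∈ C, A₁.mulVec x ∈ C) :
    memM C (A₀ + A₁) := by
  intro t ht x hx
  rcases Nat.eq_zero_or_pos n with hn | hn
  · subst hn
    have : (NormedSpace.exp (t • (A₀ + A₁))).mulVec x = x := Subsingleton.elim _ _
    rwa [this]
  haveI : Nonempty (Fin n) := ⟨⟨0, hn⟩⟩
  letI : SeminormedRing (Matrix (Fin n) (Fin n) ℝ) := Matrix.linftyOpSemiNormedRing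
  letI : NormedRing (Matrix (Fin n) (Fin n) ℝ) := Matrix.linftyOpNormedRing
  letI : NormedAlgebra ℝ (Matrix (Fin n) (Fin n) ℝ) := Matrix.linftyOpNormedAlgebra
  haveI : NormOneClass (Matrix (Fin n) (Fin n) ℝ) := Matrix.linfty_opNormOneClass
  have hadd : ∀ y ∈ C, ∀ z ∈ C, ∀ s : ℝ, 0 ≤ s → y + s • z ∈ C := by
    intro y hy z hz s hs
    rcases eq_or_lt_of_le hs with h | h
    · rw [← h, zero_smul, add_zero]; exact hy
    · have hsz : s • z ∈ C := hcone z hz s h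
      have hmid : (1/2 : ℝ) • y + (1/2 : ℝ) • (s • z) ∈ C :=
        hconv hy hsz (by norm_num) (by norm_num) (by norm_num)
      have h2 := hcone _ hmid 2 (by norm_num)
      have : (2 : ℝ) • ((1/2 : ℝ) • y + (1/2 : ℝ) • (s • z)) = y + s • z := by
        rw [smul_add, smul_smul, smul_smul]; norm_num
      rwa [this] at h2
  set Q : ℕ → Matrix (Fin n) (Fin n) ℝ := fun k =>
    NormedSpace.exp ((k : ℝ)⁻¹ • (t • A₀)) * (1 + (k : ℝ)⁻¹ • (t • A₁)) with hQ
  have hQmem : ∀ k : ℕ, ∀ y ∈ C, (Q k).mulVec y ∈ C := by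
    intro k y hy
    have h1 : (1 + (k : ℝ)⁻¹ • (t • A₁)).mulVec y = y + ((k : ℝ)⁻¹ * t) • (A₁.mulVec y) := by
      rw [Matrix.add_mulVec, Matrix.one_mulVec, ← smul_smul, Matrix.smul_mulVec,
        Matrix.smul_mulVec, smul_smul]
    have hy1 : (1 + (k : ℝ)⁻¹ • (t • A₁)).mulVec y ∈ C := by
      rw [h1]
      exact hadd y hy _ (hA₁ y hy) _ (by positivity)
    have h2 : (Q k).mulVec y
        = (NormedSpace.exp ((k : ℝ)⁻¹ • (t • A₀))).mulVec ((1 + (k : ℝ)⁻¹ • (t • A₁)).mulVec y) := by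
      rw [hQ, Matrix.mulVec_mulVec]
    rw [h2]
    have hexp : NormedSpace.exp ((k : ℝ)⁻¹ • (t • A₀)) = NormedSpace.exp (((k : ℝ)⁻¹ * t) • A₀) := by
      rw [smul_smul]
    rw [hexp]
    rw [← hA₀ ((k : ℝ)⁻¹ * t)]
    exact Set.mem_image_of_mem _ hy1
  have hQpow : ∀ k m : ℕ, ∀ y ∈ C, ((Q k) ^ m).mulVec y ∈ C := by
    intro k m
    induction m with
    | zero => intro y hy; rwa [pow_zero, Matrix.one_mulVec]
    | succ m ih =>
        intro y hy
        have : (Q k ^ (m + 1)).mulVec y = (Q k ^ m).mulVec ((Q k).mulVec y) := by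
          rw [Matrix.mulVec_mulVec, ← pow_succ]
        rw [this]
        exact ih _ (hQmem k y hy)
  have htrot := trotter (t • A₀) (t • A₁)
  have hsum : t • A₀ + t • A₁ = t • (A₀ + A₁) := (smul_add t A₀ A₁).symm
  rw [hsum] at htrot
  have hcont : Continuous fun M : Matrix (Fin n) (Fin n) ℝ => M.mulVec x := by
    apply continuous_pi
    intro i
    simp only [Matrix.mulVec, dotProduct]
    exact continuous_finset_sum _ fun j _ =>
      ((continuous_apply_apply i j).mul continuous_const)
  have hlim : Filter.Tendsto (fun k : ℕ => ((Q k) ^ k).mulVec x) Filter.atTop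
      (nhds ((NormedSpace.exp (t • (A₀ + A₁))).mulVec x)) :=
    (hcont.tendsto _).comp htrot
  exact hclosed.mem_of_tendsto hlim (Filter.Eventually.of_forall fun k => hQpow k k x hx)
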